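/- Let Ω denote the first uncountable ordinal and let f : [0,Ω) × [0,Ω) → ℝ be a continuous function, where [0,Ω) carries the order topology and the square the product topology. Then f is eventually constant: there exists α < Ω such that f is constant on [α,Ω) × [α,Ω). -/

import Mathlib

/-- The space `[0, Ω)` of countable ordinals, `Ω` the first uncountable ordinal,
with its order topology. -/
noncomputable def Omega1 : Type := (Cardinal.aleph 1).ord.ToType

noncomputable instance : LinearOrder Omega1 :=
  inferInstanceAs (LinearOrder (Cardinal.aleph 1).ord.ToType)

noncomputable instance : TopologicalSpace Omega1 := Preorder.topology Omega1

instance : OrderTopology Omega1 := ⟨rfl⟩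

instance : WellFoundedLT Omega1 :=
  inferInstanceAs (WellFoundedLT (Cardinal.aleph 1).ord.ToType)

lemma Omega1.nonempty : Nonempty Omega1 := by
  refine Ordinal.toType_nonempty_iff_ne_zero.mpr (ne_of_gt ?_)
  rw [← Cardinal.ord_zero]
  exact Cardinal.ord_lt_ord.mpr (Cardinal.aleph_pos 1)

/-- Every ℕ-indexed sequence in `Omega1` is bounded above. -/
lemma Omega1.bdd (x : ℕ → Omega1) : ∃ b : Omega1, ∀ n, x n ≤ b := by
  set e := (Ordinal.ToType.mk (o := (Cardinal.aleph 1).ord)) with he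
  let o : ℕ → Ordinal := fun n => (e.symm (x n)).1
  have ho : ∀ n, o n < (Cardinal.aleph 1).ord := fun n => (e.symm (x n)).2
  have hlt : iSup o < (Cardinal.aleph 1).ord :=
    Cardinal.iSup_lt_ord_of_isRegular Cardinal.isRegular_aleph_one
      (by simpa using Cardinal.aleph0_lt_aleph_one) ho
  refine ⟨e ⟨iSup o, hlt⟩, fun n => ?_⟩
  have hx : x n = e (e.symm (x n)) := (e.apply_symm_apply _).symm
  rw [hx]
  exact e.monotone (Ordinal.le_iSup o n)

/-- Every ℕ-indexed sequence in `Omega1` has a least upper bound. -/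
lemma Omega1.exists_isLUB (x : ℕ → Omega1) : ∃ δ : Omega1, IsLUB (Set.range x) δ := by
  obtain ⟨b, hb⟩ := Omega1.bdd x
  have hS : (upperBounds (Set.range x)).Nonempty :=
    ⟨b, fun y hy => by obtain ⟨n, rfl⟩ := hy; exact hb n⟩
  obtain ⟨δ, hδS, hmin⟩ :=
    (IsWellFounded.wf (r := ((· < ·) : Omega1 → Omega1 → Prop))).has_min _ hS
  exact ⟨δ, hδS, fun c hc => not_lt.mp (hmin c hc)⟩

/-- Uniform eventual oscillation bound. -/
lemma Omega1.osc (f : Omega1 × Omega1 → ℝ) (hf : Continuous f) {ε : ℝ} (hε : 0 < ε) :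
    ∃ α : Omega1, ∀ p q : Omega1 × Omega1, α ≤ p.1 → α ≤ p.2 → α ≤ q.1 → α ≤ q.2 →
      dist (f p) (f q) ≤ ε := by
  by_contra h
  push_neg at h
  choose p q h1 h2 h3 h4 h5 using h
  obtain ⟨a0⟩ := Omega1.nonempty
  let g : Omega1 → Omega1 := fun α => max (max (p α).1 (p α).2) (max (q α).1 (q α).2)
  let β : ℕ → Omega1 := fun n => Nat.rec a0 (fun _ b => g b) n
  have hβsucc : ∀ n, β (n + 1) = g (β n) := fun n => rfl
  have hp1le : ∀ n, (p (β n)).1 ≤ β (n + 1) := fun n =>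
    (le_max_left _ _).trans (le_max_left _ _)
  have hp2le : ∀ n, (p (β n)).2 ≤ β (n + 1) := fun n =>
    (le_max_right _ _).trans (le_max_left _ _)
  have hq1le : ∀ n, (q (β n)).1 ≤ β (n + 1) := fun n =>
    (le_max_left _ _).trans (le_max_right _ _)
  have hq2le : ∀ n, (q (β n)).2 ≤ β (n + 1) := fun n =>
    (le_max_right _ _).trans (le_max_right _ _)
  have hβ : Monotone β :=
    monotone_nat_of_le_succ (fun n => (h1 (β n)).trans (hp1le n))
  obtain ⟨δ, hδ⟩ := Omega1.exists_isLUB β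
  have hβt : Filter.Tendsto β Filter.atTop (nhds δ) := tendsto_atTop_isLUB hβ hδ
  have hβst : Filter.Tendsto (fun n => β (n + 1)) Filter.atTop (nhds δ) :=
    hβt.comp (Filter.tendsto_add_atTop_nat 1)
  have tP1 : Filter.Tendsto (fun n => (p (β n)).1) Filter.atTop (nhds δ) :=
    tendsto_of_tendsto_of_tendsto_of_le_of_le hβt hβst (fun n => h1 (β n)) hp1le
  have tP2 : Filter.Tendsto (fun n => (p (β n)).2) Filter.atTop (nhds δ) :=
    tendsto_of_tendsto_of_tendsto_of_le_of_le hβt hβst (fun n => h2 (β n)) hp2le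
  have tQ1 : Filter.Tendsto (fun n => (q (β n)).1) Filter.atTop (nhds δ) :=
    tendsto_of_tendsto_of_tendsto_of_le_of_le hβt hβst (fun n => h3 (β n)) hq1le
  have tQ2 : Filter.Tendsto (fun n => (q (β n)).2) Filter.atTop (nhds δ) :=
    tendsto_of_tendsto_of_tendsto_of_le_of_le hβt hβst (fun n => h4 (β n)) hq2le
  have tP : Filter.Tendsto (fun n => p (β n)) Filter.atTop (nhds (δ, δ)) :=
    tP1.prodMk_nhds tP2
  have tQ : Filter.Tendsto (fun n => q (β n)) Filter.atTop (nhds (δ, δ)) :=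
    tQ1.prodMk_nhds tQ2
  have hfp : Filter.Tendsto (fun n => f (p (β n))) Filter.atTop (nhds (f (δ, δ))) :=
    (hf.tendsto (δ, δ)).comp tP
  have hfq : Filter.Tendsto (fun n => f (q (β n))) Filter.atTop (nhds (f (δ, δ))) :=
    (hf.tendsto (δ, δ)).comp tQ
  have hdist : Filter.Tendsto (fun n => dist (f (p (β n))) (f (q (β n))))
      Filter.atTop (nhds 0) := by
    simpa [dist_self] using hfp.dist hfq
  obtain ⟨n, hn⟩ := (hdist.eventually (gt_mem_nhds hε)).exists
  exact absurd (h5 (β n)) (not_lt.mpr hn.le)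

/-- A continuous real-valued function on `[0,Ω)²` is eventually constant. -/
theorem stmt15 (f : Omega1 × Omega1 → ℝ) (hf : Continuous f) :
    ∃ α : Omega1, ∀ p q : Omega1 × Omega1,
      α ≤ p.1 → α ≤ p.2 → α ≤ q.1 → α ≤ q.2 → f p = f q := by
  have key : ∀ n : ℕ, ∃ α : Omega1, ∀ p q : Omega1 × Omega1,
      α ≤ p.1 → α ≤ p.2 → α ≤ q.1 → α ≤ q.2 → dist (f p) (f q) ≤ 1 / (n + 1) :=
    fun n => Omega1.osc f hf (by positivity)
  choose a ha using key
  obtain ⟨b, hb⟩ := Omega1.bdd a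
  refine ⟨b, fun p q hp1 hp2 hq1 hq2 => ?_⟩
  have hall : ∀ n : ℕ, dist (f p) (f q) ≤ 1 / (n + 1) := fun n =>
    ha n p q ((hb n).trans hp1) ((hb n).trans hp2) ((hb n).trans hq1) ((hb n).trans hq2)
  have hd : dist (f p) (f q) ≤ 0 := by
    by_contra h
    push_neg at h
    obtain ⟨n, hn⟩ := exists_nat_one_div_lt h
    exact absurd (hall n) (not_le.mpr hn)
  exact dist_le_zero.mp hd
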